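/- arXiv:2006.12294 — 3 statements merged into one kernel-verified Lean document; each statement's English description precedes it below -/
import Mathlib

section
/- Let X be an n×d real matrix, L a symmetric positive semidefinite n×n matrix, α > 0, and W a fixed d×k matrix. The function Z ↦ ‖X − Z Wᵀ‖_F² + α·Tr(Zᵀ L Z) over n×k matrices Z, subject to Wᵀ W = I_k, attains its unique minimum at Z* = (I + αL)⁻¹ X W. -/
open Matrix

/-- For fixed orthonormal `W`, the GPCA objective
`‖X − Z Wᵀ‖_F² + α·Tr(Zᵀ L Z)` (with the squared Frobenius norm written as
`Tr((X − Z Wᵀ)ᵀ (X − Z Wᵀ))`) attains its unique minimum at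
`Z* = (I + αL)⁻¹ X W`. -/
theorem stmt1 {n d k : ℕ} (X : Matrix (Fin n) (Fin d) ℝ)
    (L : Matrix (Fin n) (Fin n) ℝ) (α : ℝ) (W : Matrix (Fin d) (Fin k) ℝ)
    (hL : L.PosSemidef) (hα : 0 < α) (hW : Wᵀ * W = 1)
    (f : Matrix (Fin n) (Fin k) ℝ → ℝ)
    (hf : ∀ Z, f Z = Matrix.trace ((X - Z * Wᵀ)ᵀ * (X - Z * Wᵀ))
        + α * Matrix.trace (Zᵀ * L * Z))
    (Zstar : Matrix (Fin n) (Fin k) ℝ)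
    (hZstar : Zstar = (1 + α • L)⁻¹ * X * W) :
    ∀ Z : Matrix (Fin n) (Fin k) ℝ, Z ≠ Zstar → f Zstar < f Z := by
  set M : Matrix (Fin n) (Fin n) ℝ := 1 + α • L with hM
  have hLt : Lᵀ = L := by simpa using (isHermitian_iff_isSymm.mp hL.1).eq
  have hsm : (α • L).PosSemidef := by
    refine Matrix.PosSemidef.of_dotProduct_mulVec_nonneg (by simp [Matrix.IsHermitian, Matrix.conjTranspose_smul, hLt]) fun x => ?_
    have := hL.dotProduct_mulVec_nonneg x
    simp only [smul_mulVec, dotProduct_smul, smul_eq_mul]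
    exact mul_nonneg hα.le (by simpa using this)
  have hMpd : M.PosDef := Matrix.PosDef.add_posSemidef Matrix.PosDef.one hsm
  have hMsymm : Mᵀ = M := by
    have := hMpd.isHermitian
    exact (isHermitian_iff_isSymm.mp this).eq
  have hMinv : M * M⁻¹ = 1 := mul_nonsing_inv M hMpd.det_pos.ne'.isUnit
  have hMZ : M * Zstar = X * W := by
    rw [hZstar, ← Matrix.mul_assoc, ← Matrix.mul_assoc, hMinv, Matrix.one_mul]
  -- expansion of the objective
  have expand : ∀ Z : Matrix (Fin n) (Fin k) ℝ,
      f Z = trace (Xᵀ * X) - 2 * trace (Zᵀ * (X * W)) + trace (Zᵀ * M * Z) := by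
    intro Z
    have h1 : trace ((Z * Wᵀ)ᵀ * (Z * Wᵀ)) = trace (Zᵀ * Z) := by
      rw [transpose_mul, transpose_transpose,
        ← Matrix.mul_assoc (W * Zᵀ) Z Wᵀ, trace_mul_comm _ Wᵀ,
        ← Matrix.mul_assoc, ← Matrix.mul_assoc, hW, Matrix.one_mul]
    have h2 : trace (Xᵀ * (Z * Wᵀ)) = trace (Zᵀ * (X * W)) := by
      rw [← trace_transpose (Xᵀ * (Z * Wᵀ)), transpose_mul, transpose_mul,
        transpose_transpose, transpose_transpose, Matrix.mul_assoc,
        trace_mul_comm W (Zᵀ * X), Matrix.mul_assoc]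
    have h3 : trace ((Z * Wᵀ)ᵀ * X) = trace (Zᵀ * (X * W)) := by
      rw [transpose_mul, transpose_transpose, Matrix.mul_assoc,
        trace_mul_comm W (Zᵀ * X), Matrix.mul_assoc]
    have h4 : Zᵀ * M * Z = Zᵀ * Z + α • (Zᵀ * L * Z) := by
      rw [hM, Matrix.mul_add, Matrix.add_mul, Matrix.mul_one]
      congr 1
      rw [Matrix.mul_smul, Matrix.smul_mul]
    have h5 : (X - Z * Wᵀ)ᵀ * (X - Z * Wᵀ)
        = Xᵀ * X - Xᵀ * (Z * Wᵀ) - ((Z * Wᵀ)ᵀ * X - (Z * Wᵀ)ᵀ * (Z * Wᵀ)) := by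
      rw [transpose_sub, Matrix.sub_mul, Matrix.mul_sub, Matrix.mul_sub]
    rw [hf, h5, trace_sub, trace_sub, trace_sub, h1, h2, h3, h4, trace_add,
      trace_smul, smul_eq_mul]
    ring
  -- completing the square
  have key : ∀ Z : Matrix (Fin n) (Fin k) ℝ,
      f Z = f Zstar + trace ((Z - Zstar)ᵀ * M * (Z - Zstar)) := by
    intro Z
    have hzz : trace (Zᵀ * M * Zstar) = trace (Zᵀ * (X * W)) := by
      rw [Matrix.mul_assoc, hMZ]
    have hcr : trace (Zstarᵀ * M * Z) = trace (Zᵀ * (X * W)) := by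
      have ht : (Zstarᵀ * M * Z)ᵀ = Zᵀ * (M * Zstar) := by
        rw [transpose_mul, transpose_mul, transpose_transpose, hMsymm]
      rw [← trace_transpose (Zstarᵀ * M * Z), ht, hMZ]
    have hss : trace (Zstarᵀ * M * Zstar) = trace (Zstarᵀ * (X * W)) := by
      rw [Matrix.mul_assoc, hMZ]
    have hexp : (Z - Zstar)ᵀ * M * (Z - Zstar)
        = Zᵀ * M * Z - Zᵀ * M * Zstar - (Zstarᵀ * M * Z - Zstarᵀ * M * Zstar) := by
      rw [transpose_sub, Matrix.sub_mul, Matrix.sub_mul, Matrix.mul_sub,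
        Matrix.mul_sub]
    rw [expand Z, expand Zstar, hexp, trace_sub, trace_sub, trace_sub,
      hzz, hcr, hss]
    ring
  -- strict positivity of the quadratic remainder
  intro Z hZ
  set D : Matrix (Fin n) (Fin k) ℝ := Z - Zstar with hD
  have hDne : D ≠ 0 := sub_ne_zero.mpr hZ
  have diag : ∀ j, (Dᵀ * M * D) j j = (fun i => D i j) ⬝ᵥ M *ᵥ (fun i => D i j) := by
    intro j
    simp only [Matrix.mul_apply, Matrix.transpose_apply, dotProduct, Matrix.mulVec,
      Finset.sum_mul, Finset.mul_sum]
    rw [Finset.sum_comm]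
    exact Finset.sum_congr rfl fun i _ => Finset.sum_congr rfl fun i' _ => by ring
  obtain ⟨i0, j0, hij⟩ : ∃ i j, D i j ≠ 0 := by
    by_contra h
    push_neg at h
    exact hDne (Matrix.ext fun i j => h i j)
  have hcol : (fun i => D i j0) ≠ 0 := by
    intro h
    exact hij (congrFun h i0)
  have hpos : 0 < trace (Dᵀ * M * D) := by
    rw [Matrix.trace]
    refine Finset.sum_pos' (fun j _ => ?_) ⟨j0, Finset.mem_univ _, ?_⟩
    · rw [Matrix.diag_apply, diag j]
      simpa using hMpd.posSemidef.dotProduct_mulVec_nonneg (fun i => D i j)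
    · rw [Matrix.diag_apply, diag j0]
      simpa using hMpd.dotProduct_mulVec_pos hcol
  rw [key Z]
  linarith
end

section
/- Let X be an n×d real matrix, L a symmetric positive semidefinite n×n matrix, α > 0, and set M = (I + αL)⁻¹. For any d×k matrix W with WᵀW = I_k, the quantity ‖X − M X W Wᵀ‖_F² + α·Tr(Wᵀ Xᵀ M L M X W) equals Tr(Xᵀ X) − Tr(Wᵀ Xᵀ M X W). -/
open Matrix

/-- Trace simplification of the GPCA objective after substituting the optimal
`Z* = M X W`, where `M = (I + αL)⁻¹`. -/
theorem stmt2 {n d k : ℕ} (X : Matrix (Fin n) (Fin d) ℝ)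
    (L : Matrix (Fin n) (Fin n) ℝ) (α : ℝ)
    (hL : L.PosSemidef) (hα : 0 < α)
    (M : Matrix (Fin n) (Fin n) ℝ) (hM : M = (1 + α • L)⁻¹)
    (W : Matrix (Fin d) (Fin k) ℝ) (hW : Wᵀ * W = 1) :
    Matrix.trace ((X - M * X * W * Wᵀ)ᵀ * (X - M * X * W * Wᵀ))
        + α * Matrix.trace (Wᵀ * Xᵀ * M * L * M * X * W)
      = Matrix.trace (Xᵀ * X) - Matrix.trace (Wᵀ * Xᵀ * M * X * W) := by
  set A : Matrix (Fin n) (Fin n) ℝ := 1 + α • L with hA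
  have hLsym : Lᵀ = L := by simpa [Matrix.IsSymm] using hL.1
  have hsm : (α • L).PosSemidef := by
    rw [Matrix.posSemidef_iff_dotProduct_mulVec]
    constructor
    · simpa [Matrix.IsHermitian] using congrArg (α • ·) hLsym
    · intro x
      have := hL.dotProduct_mulVec_nonneg x
      simp only [Matrix.smul_mulVec, dotProduct_smul, smul_eq_mul]
      exact mul_nonneg hα.le this
  have hApd : A.PosDef := by
    simpa [hA] using Matrix.PosDef.add_posSemidef Matrix.PosDef.one hsm
  have hdet : IsUnit A.det := isUnit_iff_ne_zero.mpr (ne_of_gt hApd.det_pos)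
  have hMA : M * A = 1 := by rw [hM]; exact Matrix.nonsing_inv_mul A hdet
  have hAM : A * M = 1 := by rw [hM]; exact Matrix.mul_nonsing_inv A hdet
  have hAsym : Aᵀ = A := by
    simp [hA, Matrix.transpose_add, Matrix.transpose_smul, hLsym]
  have hMsym : Mᵀ = M := by
    rw [hM, Matrix.transpose_nonsing_inv, hAsym]
  have key : M * M + α • (M * (L * M)) = M := by
    have : M * (A * M) = M * M + α • (M * (L * M)) := by
      simp [hA, Matrix.mul_add, Matrix.add_mul, Matrix.mul_smul, Matrix.smul_mul,
        Matrix.mul_assoc]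
    rw [hAM] at this
    simpa using this.symm
  have t1 : Matrix.trace (Xᵀ * (M * X * W * Wᵀ)) = Matrix.trace (Wᵀ * Xᵀ * M * X * W) := by
    rw [show Xᵀ * (M * X * W * Wᵀ) = (Xᵀ * M * X * W) * Wᵀ by
      simp only [Matrix.mul_assoc], Matrix.trace_mul_comm]
    simp only [Matrix.mul_assoc]
  have t2 : Matrix.trace ((M * X * W * Wᵀ)ᵀ * X) = Matrix.trace (Wᵀ * Xᵀ * M * X * W) := by
    rw [show ((M * X * W * Wᵀ)ᵀ * X) = W * (Wᵀ * (Xᵀ * (Mᵀ * X))) by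
      simp only [Matrix.transpose_mul, Matrix.transpose_transpose, Matrix.mul_assoc],
      Matrix.trace_mul_comm, hMsym]
    simp only [Matrix.mul_assoc]
  have t3 : Matrix.trace ((M * X * W * Wᵀ)ᵀ * (M * X * W * Wᵀ))
      = Matrix.trace (Wᵀ * (Xᵀ * (M * (M * (X * W))))) := by
    have h1 : (M * X * W * Wᵀ)ᵀ * (M * X * W * Wᵀ)
        = W * (Wᵀ * (Xᵀ * (M * (M * (X * W)))) * Wᵀ) := by
      simp only [Matrix.transpose_mul, Matrix.transpose_transpose, hMsym, Matrix.mul_assoc]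
    rw [h1, Matrix.trace_mul_comm]
    rw [show Wᵀ * (Xᵀ * (M * (M * (X * W)))) * Wᵀ * W
        = Wᵀ * (Xᵀ * (M * (M * (X * W)))) * (Wᵀ * W) by simp only [Matrix.mul_assoc],
      hW, Matrix.mul_one]
  have t4 : Matrix.trace (Wᵀ * (Xᵀ * (M * (M * (X * W)))))
        + α * Matrix.trace (Wᵀ * Xᵀ * M * L * M * X * W)
      = Matrix.trace (Wᵀ * Xᵀ * M * X * W) := by
    have e : Wᵀ * (Xᵀ * (M * (M * (X * W))))
          + α • (Wᵀ * (Xᵀ * (M * (L * (M * (X * W))))))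
        = Wᵀ * (Xᵀ * ((M * M + α • (M * (L * M))) * (X * W))) := by
      simp [Matrix.add_mul, Matrix.mul_add, Matrix.smul_mul, Matrix.mul_smul,
        Matrix.mul_assoc]
    rw [key] at e
    have e2 := congrArg Matrix.trace e
    simp only [Matrix.trace_add, Matrix.trace_smul, smul_eq_mul] at e2
    rw [show Wᵀ * Xᵀ * M * L * M * X * W = Wᵀ * (Xᵀ * (M * (L * (M * (X * W))))) by
      simp only [Matrix.mul_assoc],
      show Wᵀ * Xᵀ * M * X * W = Wᵀ * (Xᵀ * (M * (X * W))) by simp only [Matrix.mul_assoc]]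
    exact e2
  have expand : Matrix.trace ((X - M * X * W * Wᵀ)ᵀ * (X - M * X * W * Wᵀ))
      = Matrix.trace (Xᵀ * X) - Matrix.trace (Xᵀ * (M * X * W * Wᵀ))
        - Matrix.trace ((M * X * W * Wᵀ)ᵀ * X)
        + Matrix.trace ((M * X * W * Wᵀ)ᵀ * (M * X * W * Wᵀ)) := by
    simp only [Matrix.transpose_sub, Matrix.sub_mul, Matrix.mul_sub, Matrix.trace_sub]
    ring
  rw [expand, t1, t2, t3]
  linarith [t4]
end

section
/- (Supervised GPCA closed form.) Let X be an n×d matrix, L_spr a symmetric positive semidefinite n×n matrix, and α > 0. The minimum of ‖X − ZWᵀ‖_F² + α·Tr(Zᵀ L_spr Z) over n×k matrices Z and d×k matrices W with WᵀW = I_k is attained at W* = (w₁,...,w_k), the top-k orthonormal eigenvectors of Xᵀ(I + αL_spr)⁻¹X, and Z* = (I + αL_spr)⁻¹ X W*; the minimum value equals Tr(XᵀX) minus the sum of the k largest eigenvalues of Xᵀ(I + αL_spr)⁻¹X. -/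
open Matrix

lemma myDiagNonneg {a b : ℕ} (M : Matrix (Fin a) (Fin b) ℝ) (i : Fin b) :
    0 ≤ (Mᵀ * M).diag i := by
  simp only [Matrix.diag, Matrix.mul_apply, Matrix.transpose_apply]
  exact Finset.sum_nonneg fun j _ => mul_self_nonneg _

lemma myTracePsd {m p : ℕ} {A : Matrix (Fin m) (Fin m) ℝ} (hA : A.PosSemidef)
    (M : Matrix (Fin m) (Fin p) ℝ) : 0 ≤ Matrix.trace (Mᵀ * (A * M)) := by
  rw [Matrix.trace]
  apply Finset.sum_nonneg
  intro j _
  have h := hA.dotProduct_mulVec_nonneg (fun i => M i j)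
  rw [star_trivial] at h
  have hd : (Mᵀ * (A * M)).diag j = (fun i => M i j) ⬝ᵥ A.mulVec (fun i => M i j) := by
    simp [Matrix.diag, Matrix.mul_apply, Matrix.mulVec, dotProduct, Matrix.transpose_apply]
  rw [hd]
  exact h

lemma myKyFan {d k : ℕ} (hk : k ≤ d) (lam c : Fin d → ℝ)
    (hmono : Antitone lam) (hc0 : ∀ i, 0 ≤ c i) (hc1 : ∀ i, c i ≤ 1)
    (hsum : ∑ i, c i = (k : ℝ)) :
    ∑ i, lam i * c i ≤ ∑ j : Fin k, lam (Fin.castLE hk j) := by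
  rcases Nat.eq_zero_or_pos d with hd | hd
  · subst hd
    have hk0 : k = 0 := Nat.le_zero.mp hk
    subst hk0
    simp
  -- split lemma
  have hsplit : ∀ g : Fin d → ℝ,
      ∑ j : Fin k, g (Fin.castLE hk j) = ∑ i : Fin d, (if (i : ℕ) < k then g i else 0) := by
    intro g
    set G : ℕ → ℝ := fun m => if h : m < d then g ⟨m, h⟩ else 0 with hG
    have h1 : ∑ j : Fin k, g (Fin.castLE hk j) = ∑ m ∈ Finset.range k, G m := by
      rw [← Fin.sum_univ_eq_sum_range G k]
      apply Finset.sum_congr rfl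
      intro j _
      have hjd : (j : ℕ) < d := lt_of_lt_of_le j.isLt hk
      simp [hG, hjd, Fin.castLE]
    have h2 : ∑ i : Fin d, (if (i : ℕ) < k then g i else 0)
        = ∑ m ∈ Finset.range d, (if m < k then G m else 0) := by
      rw [← Fin.sum_univ_eq_sum_range (fun m => if m < k then G m else 0) d]
      apply Finset.sum_congr rfl
      intro i _
      by_cases h : (i : ℕ) < k
      · simp [h, hG, i.isLt]
      · simp [h]
    have h3 : ∑ m ∈ Finset.range d, (if m < k then G m else 0) = ∑ m ∈ Finset.range k, G m := by
      rw [← Finset.sum_filter]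
      congr 1
      ext m
      simp only [Finset.mem_filter, Finset.mem_range]
      omega
    rw [h1, h2, h3]
  set t : ℝ := lam ⟨min k (d - 1), by omega⟩ with ht
  set ind : Fin d → ℝ := fun i => if (i : ℕ) < k then 1 else 0 with hind
  have hind_sum : ∑ i, ind i = (k : ℝ) := by
    have := hsplit (fun _ => (1 : ℝ))
    simp only [hind]
    rw [← this]
    simp
  have hlamind : ∑ i, lam i * ind i = ∑ j : Fin k, lam (Fin.castLE hk j) := by
    rw [hsplit lam]
    apply Finset.sum_congr rfl
    intro i _
    by_cases h : (i : ℕ) < k <;> simp [hind, h]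
  have hterm : ∀ i : Fin d, (lam i - t) * (c i - ind i) ≤ 0 := by
    intro i
    by_cases h : (i : ℕ) < k
    · have hle : i ≤ (⟨min k (d - 1), by omega⟩ : Fin d) := by
        rw [Fin.le_def]
        simp only
        omega
      have h1 : t ≤ lam i := hmono hle
      have h2 : c i - ind i ≤ 0 := by simp [hind, h]; linarith [hc1 i]
      exact mul_nonpos_of_nonneg_of_nonpos (by linarith) h2
    · have hle : (⟨min k (d - 1), by omega⟩ : Fin d) ≤ i := by
        rw [Fin.le_def]
        simp only
        omega
      have h1 : lam i ≤ t := hmono hle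
      have h2 : 0 ≤ c i - ind i := by simp [hind, h]; linarith [hc0 i]
      exact mul_nonpos_of_nonpos_of_nonneg (by linarith) h2
    
  have key : ∑ i, (lam i - t) * (c i - ind i) ≤ 0 :=
    Finset.sum_nonpos fun i _ => hterm i
  have h0 : ∑ i, (c i - ind i) = 0 := by
    rw [Finset.sum_sub_distrib, hsum, hind_sum]; ring
  have hexp : (∑ i, lam i * c i) - (∑ i, lam i * ind i) = ∑ i, (lam i - t) * (c i - ind i) := by
    rw [← Finset.sum_sub_distrib]
    calc ∑ i, (lam i * c i - lam i * ind i)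
        = ∑ i, ((lam i - t) * (c i - ind i) + t * (c i - ind i)) :=
          Finset.sum_congr rfl (fun i _ => by ring)
      _ = (∑ i, (lam i - t) * (c i - ind i)) + t * ∑ i, (c i - ind i) := by
          rw [Finset.sum_add_distrib, Finset.mul_sum]
      _ = ∑ i, (lam i - t) * (c i - ind i) := by rw [h0]; ring
  linarith [hexp, key, hlamind]

/-- Supervised GPCA closed form: the minimum of
`‖X − ZWᵀ‖_F² + α·Tr(Zᵀ L_spr Z)` (squared Frobenius norm written as a trace)
over `Z` and orthonormal `W` is attained at `W*`, the top-`k` orthonormal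
eigenvectors of `Xᵀ(I + αL_spr)⁻¹X`, together with
`Z* = (I + αL_spr)⁻¹ X W*`, and the minimum value equals
`Tr(XᵀX)` minus the sum of the `k` largest eigenvalues. -/
theorem stmt15 {n d k : ℕ} (hk : k ≤ d) (X : Matrix (Fin n) (Fin d) ℝ)
    (Lspr : Matrix (Fin n) (Fin n) ℝ) (hL : Lspr.PosSemidef)
    (α : ℝ) (hα : 0 < α)
    (S : Matrix (Fin d) (Fin d) ℝ) (hS : S = Xᵀ * (1 + α • Lspr)⁻¹ * X)
    (w : Fin d → (Fin d → ℝ)) (lam : Fin d → ℝ)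
    (horth : ∀ i j, w i ⬝ᵥ w j = if i = j then (1 : ℝ) else 0)
    (heig : ∀ i, S.mulVec (w i) = lam i • w i)
    (hsorted : Antitone lam)
    (f : Matrix (Fin n) (Fin k) ℝ → Matrix (Fin d) (Fin k) ℝ → ℝ)
    (hf : ∀ Z W, f Z W = Matrix.trace ((X - Z * Wᵀ)ᵀ * (X - Z * Wᵀ))
        + α * Matrix.trace (Zᵀ * Lspr * Z))
    (Wstar : Matrix (Fin d) (Fin k) ℝ)
    (hWstar : Wstar = Matrix.of fun i (j : Fin k) => w (Fin.castLE hk j) i)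
    (Zstar : Matrix (Fin n) (Fin k) ℝ)
    (hZstar : Zstar = (1 + α • Lspr)⁻¹ * X * Wstar) :
    Wstarᵀ * Wstar = 1 ∧
      (∀ (Z : Matrix (Fin n) (Fin k) ℝ) (W : Matrix (Fin d) (Fin k) ℝ),
        Wᵀ * W = 1 → f Zstar Wstar ≤ f Z W) ∧
      f Zstar Wstar
        = Matrix.trace (Xᵀ * X) - ∑ j : Fin k, lam (Fin.castLE hk j) := by
  set A : Matrix (Fin n) (Fin n) ℝ := 1 + α • Lspr with hAdef
  -- basic facts about A
  have hLt : Lsprᵀ = Lspr := by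
    rw [← Matrix.conjTranspose_eq_transpose_of_trivial]; exact hL.1
  have hAposdef : A.PosDef := by
    rw [Matrix.posDef_iff_dotProduct_mulVec]
    constructor
    · show Aᴴ = A
      rw [Matrix.conjTranspose_eq_transpose_of_trivial, hAdef, Matrix.transpose_add,
        Matrix.transpose_one, Matrix.transpose_smul, hLt]
    · intro x hx
      rw [star_trivial]
      have hmv : A *ᵥ x = x + α • (Lspr *ᵥ x) := by
        rw [hAdef, Matrix.add_mulVec, Matrix.one_mulVec, Matrix.smul_mulVec]
      rw [hmv, dotProduct_add]
      have h1 : 0 < x ⬝ᵥ x := by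
        have h0 : x ⬝ᵥ x ≠ 0 := fun h => hx (dotProduct_self_eq_zero.mp h)
        have hnn : 0 ≤ x ⬝ᵥ x := by
          simp only [dotProduct]
          exact Finset.sum_nonneg fun i _ => mul_self_nonneg _
        exact lt_of_le_of_ne hnn (Ne.symm h0)
      have h2 : 0 ≤ x ⬝ᵥ (α • (Lspr *ᵥ x)) := by
        rw [dotProduct_smul, smul_eq_mul]
        have := hL.dotProduct_mulVec_nonneg x
        rw [star_trivial] at this
        exact mul_nonneg hα.le this
      linarith
  have hdet : IsUnit A.det := (Matrix.isUnit_iff_isUnit_det A).mp hAposdef.isUnit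
  have hAAi : A * A⁻¹ = 1 := Matrix.mul_nonsing_inv A hdet
  have hAiA : A⁻¹ * A = 1 := Matrix.nonsing_inv_mul A hdet
  have hAt : Aᵀ = A := by
    rw [← Matrix.conjTranspose_eq_transpose_of_trivial]; exact hAposdef.1
  have hAit : A⁻¹ᵀ = A⁻¹ := by rw [Matrix.transpose_nonsing_inv, hAt]
  -- key identity
  have hkey : ∀ (Z : Matrix (Fin n) (Fin k) ℝ) (W : Matrix (Fin d) (Fin k) ℝ), Wᵀ * W = 1 →
      f Z W = Matrix.trace (Xᵀ * X) - Matrix.trace (Wᵀ * (S * W))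
        + Matrix.trace ((Z - A⁻¹ * X * W)ᵀ * (A * (Z - A⁻¹ * X * W))) := by
    intro Z W hW
    rw [hf]
    have e1 : Matrix.trace ((X - Z * Wᵀ)ᵀ * (X - Z * Wᵀ))
        = Matrix.trace (Xᵀ * X) - 2 * Matrix.trace (Wᵀ * (Xᵀ * Z)) + Matrix.trace (Zᵀ * Z) := by
      have ha : Matrix.trace (Xᵀ * (Z * Wᵀ)) = Matrix.trace (Wᵀ * (Xᵀ * Z)) := by
        rw [← Matrix.mul_assoc, Matrix.trace_mul_comm]
      have hb : Matrix.trace ((Z * Wᵀ)ᵀ * X) = Matrix.trace (Wᵀ * (Xᵀ * Z)) := by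
        rw [Matrix.transpose_mul, Matrix.transpose_transpose, Matrix.mul_assoc,
          Matrix.trace_mul_comm, ← Matrix.trace_transpose, Matrix.transpose_mul,
          Matrix.transpose_mul, Matrix.transpose_transpose]
      have hc : Matrix.trace ((Z * Wᵀ)ᵀ * (Z * Wᵀ)) = Matrix.trace (Zᵀ * Z) := by
        rw [Matrix.transpose_mul, Matrix.transpose_transpose, Matrix.mul_assoc,
          Matrix.trace_mul_comm]
        simp only [Matrix.mul_assoc]
        rw [hW, Matrix.mul_one]
      rw [Matrix.transpose_sub, Matrix.sub_mul, Matrix.mul_sub, Matrix.mul_sub,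
        Matrix.trace_sub, Matrix.trace_sub, Matrix.trace_sub, ha, hb, hc]
      ring
    have e2 : Matrix.trace ((Z - A⁻¹ * X * W)ᵀ * (A * (Z - A⁻¹ * X * W)))
        = Matrix.trace (Zᵀ * Z) + α * Matrix.trace (Zᵀ * Lspr * Z)
          - 2 * Matrix.trace (Wᵀ * (Xᵀ * Z)) + Matrix.trace (Wᵀ * (S * W)) := by
      have hAB : A * (A⁻¹ * X * W) = X * W := by
        rw [← Matrix.mul_assoc, ← Matrix.mul_assoc, hAAi, Matrix.one_mul]
      have hBt : (A⁻¹ * X * W)ᵀ = Wᵀ * (Xᵀ * A⁻¹) := by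
        rw [Matrix.transpose_mul, Matrix.transpose_mul, hAit]
      have t1 : Matrix.trace (Zᵀ * (A * Z))
          = Matrix.trace (Zᵀ * Z) + α * Matrix.trace (Zᵀ * Lspr * Z) := by
        have : A * Z = Z + α • (Lspr * Z) := by
          rw [hAdef, Matrix.add_mul, Matrix.one_mul, Matrix.smul_mul]
        rw [this, Matrix.mul_add, Matrix.trace_add, Matrix.mul_smul, Matrix.trace_smul,
          smul_eq_mul, Matrix.mul_assoc]
      have t2 : Matrix.trace (Zᵀ * (X * W)) = Matrix.trace (Wᵀ * (Xᵀ * Z)) := by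
        rw [← Matrix.trace_transpose, Matrix.transpose_mul, Matrix.transpose_mul,
          Matrix.transpose_transpose, Matrix.mul_assoc]
      have t3 : Matrix.trace ((A⁻¹ * X * W)ᵀ * (A * Z)) = Matrix.trace (Wᵀ * (Xᵀ * Z)) := by
        rw [hBt]
        have : Wᵀ * (Xᵀ * A⁻¹) * (A * Z) = Wᵀ * (Xᵀ * Z) := by
          calc Wᵀ * (Xᵀ * A⁻¹) * (A * Z) = Wᵀ * (Xᵀ * ((A⁻¹ * A) * Z)) := by
                simp only [Matrix.mul_assoc]
            _ = Wᵀ * (Xᵀ * Z) := by rw [hAiA, Matrix.one_mul]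
        rw [this]
      have t4 : Matrix.trace ((A⁻¹ * X * W)ᵀ * (X * W)) = Matrix.trace (Wᵀ * (S * W)) := by
        rw [hBt, hS]
        have : Wᵀ * (Xᵀ * A⁻¹) * (X * W) = Wᵀ * (Xᵀ * A⁻¹ * X * W) := by
          simp only [Matrix.mul_assoc]
        rw [this]
      rw [Matrix.mul_sub, hAB, Matrix.transpose_sub, Matrix.sub_mul, Matrix.mul_sub,
        Matrix.mul_sub, Matrix.trace_sub, Matrix.trace_sub, Matrix.trace_sub,
        t1, t2, t3, t4]
      ring
    rw [e1, e2]
    ring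
  -- the orthogonal eigenvector matrix U
  set U : Matrix (Fin d) (Fin d) ℝ := Matrix.of (fun i j => w j i) with hU
  have hUtU : Uᵀ * U = 1 := by
    ext i j
    have h := horth i j
    simp only [dotProduct] at h
    rw [Matrix.mul_apply]
    simp only [Matrix.transpose_apply, hU, Matrix.of_apply]
    rw [h, Matrix.one_apply]
  have hUUt : U * Uᵀ = 1 := mul_eq_one_comm.mp hUtU
  have hSU : S * U = U * Matrix.diagonal lam := by
    ext i j
    have h := congrFun (heig j) i
    simp only [Matrix.mulVec, dotProduct, Pi.smul_apply, smul_eq_mul] at h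
    rw [Matrix.mul_apply, Matrix.mul_diagonal]
    simp only [hU, Matrix.of_apply]
    rw [h, mul_comm]
  have hSUD : S = U * Matrix.diagonal lam * Uᵀ := by
    calc S = S * (U * Uᵀ) := by rw [hUUt, Matrix.mul_one]
      _ = (S * U) * Uᵀ := by rw [Matrix.mul_assoc]
      _ = U * Matrix.diagonal lam * Uᵀ := by rw [hSU]
  -- Ky Fan bound
  have hbound : ∀ W : Matrix (Fin d) (Fin k) ℝ, Wᵀ * W = 1 →
      Matrix.trace (Wᵀ * (S * W)) ≤ ∑ j : Fin k, lam (Fin.castLE hk j) := by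
    intro W hW
    set c : Fin d → ℝ := fun i => ((Wᵀ * U)ᵀ * (Wᵀ * U)).diag i with hc
    have hceq : (Wᵀ * U)ᵀ * (Wᵀ * U) = Uᵀ * (W * Wᵀ * U) := by
      rw [Matrix.transpose_mul, Matrix.transpose_transpose]
      simp only [Matrix.mul_assoc]
    have hc0 : ∀ i, 0 ≤ c i := fun i => myDiagNonneg _ i
    have hPt : (W * Wᵀ)ᵀ = W * Wᵀ := by
      rw [Matrix.transpose_mul, Matrix.transpose_transpose]
    have hPP : W * Wᵀ * (W * Wᵀ) = W * Wᵀ := by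
      calc W * Wᵀ * (W * Wᵀ) = W * (Wᵀ * W) * Wᵀ := by simp only [Matrix.mul_assoc]
        _ = W * Wᵀ := by rw [hW, Matrix.mul_one]
    have h1P : (1 - W * Wᵀ) * (1 - W * Wᵀ) = 1 - W * Wᵀ := by
      rw [Matrix.sub_mul, Matrix.mul_sub, Matrix.mul_sub, hPP, Matrix.one_mul,
        Matrix.one_mul, Matrix.mul_one]
      abel
    have hNN : ((1 - W * Wᵀ) * U)ᵀ * ((1 - W * Wᵀ) * U) = Uᵀ * U - Uᵀ * (W * Wᵀ * U) := by
      rw [Matrix.transpose_mul, Matrix.transpose_sub, Matrix.transpose_one, hPt]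
      calc Uᵀ * (1 - W * Wᵀ) * ((1 - W * Wᵀ) * U)
          = Uᵀ * ((1 - W * Wᵀ) * (1 - W * Wᵀ)) * U := by simp only [Matrix.mul_assoc]
        _ = Uᵀ * (1 - W * Wᵀ) * U := by rw [h1P]
        _ = Uᵀ * U - Uᵀ * (W * Wᵀ * U) := by
            rw [Matrix.mul_sub, Matrix.mul_one, Matrix.sub_mul, Matrix.mul_assoc]
    have hc1 : ∀ i, c i ≤ 1 := by
      intro i
      have h := myDiagNonneg ((1 - W * Wᵀ) * U) i
      rw [hNN] at h
      have hdiag : (Uᵀ * U - Uᵀ * (W * Wᵀ * U)).diag i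
          = (Uᵀ * U).diag i - (Uᵀ * (W * Wᵀ * U)).diag i := by
        simp [Matrix.diag]
      rw [hdiag, hUtU] at h
      simp only [Matrix.diag, Matrix.one_apply_eq] at h
      have : c i = (Uᵀ * (W * Wᵀ * U)).diag i := by rw [hc, hceq]
      rw [this]
      simp only [Matrix.diag]
      linarith
    have hcsum : ∑ i, c i = (k : ℝ) := by
      have h1 : ∑ i, c i = Matrix.trace ((Wᵀ * U)ᵀ * (Wᵀ * U)) := rfl
      rw [h1, Matrix.trace_mul_comm]
      have h2 : (Wᵀ * U) * (Wᵀ * U)ᵀ = Wᵀ * W := by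
        rw [Matrix.transpose_mul, Matrix.transpose_transpose]
        calc Wᵀ * U * (Uᵀ * W) = Wᵀ * ((U * Uᵀ) * W) := by simp only [Matrix.mul_assoc]
          _ = Wᵀ * W := by rw [hUUt, Matrix.one_mul]
      rw [h2, hW, Matrix.trace_one]
      simp
    have htr : Matrix.trace (Wᵀ * (S * W)) = ∑ i, lam i * c i := by
      have h5 : Matrix.trace (Wᵀ * (S * W))
          = Matrix.trace (Matrix.diagonal lam * ((Wᵀ * U)ᵀ * (Wᵀ * U))) := by
        calc Matrix.trace (Wᵀ * (S * W)) = Matrix.trace (S * (W * Wᵀ)) := by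
              rw [Matrix.trace_mul_comm, Matrix.mul_assoc]
          _ = Matrix.trace (U * (Matrix.diagonal lam * (Uᵀ * (W * Wᵀ)))) := by
              rw [hSUD]; simp only [Matrix.mul_assoc]
          _ = Matrix.trace ((Matrix.diagonal lam * (Uᵀ * (W * Wᵀ))) * U) :=
              Matrix.trace_mul_comm _ _
          _ = Matrix.trace (Matrix.diagonal lam * ((Wᵀ * U)ᵀ * (Wᵀ * U))) := by
              rw [hceq]; simp only [Matrix.mul_assoc]
      rw [h5, Matrix.trace]
      simp only [Matrix.diag, Matrix.diagonal_mul]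
      rfl
    rw [htr]
    exact myKyFan hk lam c hsorted hc0 hc1 hcsum
  -- orthonormality of Wstar
  have hWtW : Wstarᵀ * Wstar = 1 := by
    ext i j
    have h := horth (Fin.castLE hk i) (Fin.castLE hk j)
    simp only [dotProduct] at h
    rw [Matrix.mul_apply]
    simp only [Matrix.transpose_apply, hWstar, Matrix.of_apply]
    rw [h, Matrix.one_apply]
    simp [Fin.castLE_inj]
  -- value at the optimum
  have htrstar : Matrix.trace (Wstarᵀ * (S * Wstar))
      = ∑ j : Fin k, lam (Fin.castLE hk j) := by
    have hSW : S * Wstar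
        = Matrix.of (fun i (j : Fin k) => lam (Fin.castLE hk j) * w (Fin.castLE hk j) i) := by
      ext i j
      have h := congrFun (heig (Fin.castLE hk j)) i
      simp only [Matrix.mulVec, dotProduct, Pi.smul_apply, smul_eq_mul] at h
      rw [Matrix.mul_apply]
      simp only [hWstar, Matrix.of_apply]
      exact h
    rw [hSW, Matrix.trace]
    apply Finset.sum_congr rfl
    intro j _
    have h := horth (Fin.castLE hk j) (Fin.castLE hk j)
    simp only [dotProduct, if_pos rfl] at h
    simp only [Matrix.diag, Matrix.mul_apply, Matrix.transpose_apply, hWstar, Matrix.of_apply]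
    calc ∑ i, w (Fin.castLE hk j) i * (lam (Fin.castLE hk j) * w (Fin.castLE hk j) i)
        = lam (Fin.castLE hk j) * ∑ i, w (Fin.castLE hk j) i * w (Fin.castLE hk j) i := by
          rw [Finset.mul_sum]; exact Finset.sum_congr rfl fun i _ => by ring
      _ = lam (Fin.castLE hk j) := by rw [h]; simp
  have hfstar : f Zstar Wstar
      = Matrix.trace (Xᵀ * X) - ∑ j : Fin k, lam (Fin.castLE hk j) := by
    have h := hkey Zstar Wstar hWtW
    have hz : Zstar - A⁻¹ * X * Wstar = 0 := by rw [hZstar]; simp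
    rw [hz] at h
    simp only [Matrix.transpose_zero, Matrix.mul_zero, Matrix.zero_mul,
      Matrix.trace_zero, add_zero] at h
    rw [h, htrstar]
  refine ⟨hWtW, ?_, hfstar⟩
  intro Z W hW
  rw [hfstar, hkey Z W hW]
  have h1 := hbound W hW
  have h2 := myTracePsd hAposdef.posSemidef (Z - A⁻¹ * X * W)
  linarith
end
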